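/- arXiv:2404.14226 — 2 statements merged into one kernel-verified Lean document; each statement's English description precedes it below -/
import Mathlib

section
/- Fix an integer k ≥ 2, an integer m with 0 ≤ m ≤ k−1, and constants C_F, c₁, c₂ > 0. There exists a constant C > 0, depending only on k, m, C_F, c₁, c₂, such that for every h ∈ (0,1] and every map F : ℝ² → ℝ² whose two components are polynomials of total degree ≤ k, which is injective on the closure of T̂ and satisfies |F|_{W^{r,∞}(T̂)} ≤ C_F h^r for 0 ≤ r ≤ k and c₁h² ≤ det DF(x) ≤ c₂h² for all x in the closure of T̂, the matrix-valued map B(x) := det DF(x) · (DF(x))⁻¹ satisfies |B|_{W^{m,∞}(T̂)} ≤ C h^{1+m}; moreover every entry of B is a polynomial of total degree ≤ k−1 (B is the adjugate of DF), so that D^r B(x) = 0 for every x and every r ≥ k. -/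
open Set MeasureTheory Function

noncomputable section

/-- The open reference triangle with vertices (0,0), (1,0), (0,1). -/
def Tref : Set (ℝ × ℝ) := {x | 0 < x.1 ∧ 0 < x.2 ∧ x.1 + x.2 < 1}

/-- The three vertices of the reference triangle. -/
def vtx : Fin 3 → ℝ × ℝ := ![(0, 0), (1, 0), (0, 1)]

/-- The (open) Clough–Tocher subtriangles, obtained by connecting the barycenter
to the vertices. -/
def ctK (i : Fin 3) : Set (ℝ × ℝ) :=
  interior (convexHull ℝ {vtx i, vtx (i + 1), ((1 : ℝ) / 3, (1 : ℝ) / 3)})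

/-- A map `ℝ² → ℝ²` whose two components are polynomials of total degree ≤ k. -/
def IsPolyMap (k : ℕ) (F : ℝ × ℝ → ℝ × ℝ) : Prop :=
  ∃ P Q : MvPolynomial (Fin 2) ℝ, P.totalDegree ≤ k ∧ Q.totalDegree ≤ k ∧
    ∀ x : ℝ × ℝ,
      F x = (MvPolynomial.eval ![x.1, x.2] P, MvPolynomial.eval ![x.1, x.2] Q)

/-- The Jacobian determinant of `F`. -/
def jacDet (F : ℝ × ℝ → ℝ × ℝ) (x : ℝ × ℝ) : ℝ :=
  LinearMap.det ((fderiv ℝ F x) : (ℝ × ℝ) →ₗ[ℝ] (ℝ × ℝ))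

/-- The Piola matrix `A(x) = DF(x) / det DF(x)`. -/
def Amap (F : ℝ × ℝ → ℝ × ℝ) (x : ℝ × ℝ) : (ℝ × ℝ) →L[ℝ] (ℝ × ℝ) :=
  (jacDet F x)⁻¹ • fderiv ℝ F x

/-- `B(x) = det DF(x) · (DF(x))⁻¹`, the adjugate of `DF`. -/
def Bmap (F : ℝ × ℝ → ℝ × ℝ) (x : ℝ × ℝ) : (ℝ × ℝ) →L[ℝ] (ℝ × ℝ) :=
  jacDet F x • Ring.inverse (fderiv ℝ F x)

/-- `v` is the Piola transform of `v̂` under `F`. -/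
def IsPiola (F vh v : ℝ × ℝ → ℝ × ℝ) : Prop :=
  ∀ x ∈ closure Tref, v (F x) = Amap F x (vh x)

/-- The `W^{m,p}` seminorm over a set `S` (for `p < ∞`). -/
def semiLp {E : Type*} [NormedAddCommGroup E] [NormedSpace ℝ E]
    (m : ℕ) (p : ℝ) (w : ℝ × ℝ → E) (S : Set (ℝ × ℝ)) : ℝ :=
  (∫ x in S, ‖iteratedFDeriv ℝ m w x‖ ^ p) ^ (1 / p)

/-- The `W^{m,p}` norm over a set `S`: the sum of the seminorms up to order `m`. -/
def normWmp {E : Type*} [NormedAddCommGroup E] [NormedSpace ℝ E]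
    (m : ℕ) (p : ℝ) (w : ℝ × ℝ → E) (S : Set (ℝ × ℝ)) : ℝ :=
  ∑ j ∈ Finset.range (m + 1), semiLp j p w S

/-- The isoparametric bounds of order `k` with constants `CF, c₁, c₂` and parameter `h`. -/
def IsoparamBounds (k : ℕ) (CF c₁ c₂ h : ℝ) (F : ℝ × ℝ → ℝ × ℝ) : Prop :=
  InjOn F (closure Tref) ∧
  (∀ m : ℕ, m ≤ k → ∀ x ∈ Tref, ‖iteratedFDeriv ℝ m F x‖ ≤ CF * h ^ m) ∧
  (∀ m : ℕ, m ≤ k + 1 → ∀ y ∈ F '' Tref,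
    ‖iteratedFDeriv ℝ m (invFunOn F (closure Tref)) y‖ ≤ CF * h ^ (-(m : ℤ))) ∧
  (∀ x ∈ closure Tref, c₁ * h ^ 2 ≤ jacDet F x ∧ jacDet F x ≤ c₂ * h ^ 2)

/-- The (planar) divergence of a vector field. -/
def pdiv (w : ℝ × ℝ → ℝ × ℝ) (x : ℝ × ℝ) : ℝ :=
  (fderiv ℝ w x (1, 0)).1 + (fderiv ℝ w x (0, 1)).2


open MvPolynomial

/-- Evaluation of a bivariate polynomial as a function on `ℝ × ℝ`. -/
def ev (p : MvPolynomial (Fin 2) ℝ) (x : ℝ × ℝ) : ℝ := eval ![x.1, x.2] p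

lemma contDiff_ev (p : MvPolynomial (Fin 2) ℝ) : ContDiff ℝ ⊤ (ev p) := by
  induction p using MvPolynomial.induction_on with
  | C a =>
    have h1 : ev (C a) = fun _ : ℝ × ℝ => a := by funext x; simp [ev]
    rw [h1]; exact contDiff_const
  | add p q hp hq =>
    have := hp.add hq
    convert this using 1
    funext x; simp [ev]
  | mul_X p i hp =>
    have hx : ContDiff ℝ ⊤ (fun x : ℝ × ℝ => ![x.1, x.2] i) := by
      fin_cases i
      · simpa using contDiff_fst (𝕜 := ℝ) (E := ℝ) (F := ℝ)
      · simpa using contDiff_snd (𝕜 := ℝ) (E := ℝ) (F := ℝ)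
    have : ContDiff ℝ ⊤ (fun x : ℝ × ℝ => ev p x * ![x.1, x.2] i) := hp.mul hx
    convert this using 1
    funext x; simp [ev]

/-- The derivative of `ev p` as a continuous linear map. -/
def Dp (p : MvPolynomial (Fin 2) ℝ) (x : ℝ × ℝ) : (ℝ × ℝ) →L[ℝ] ℝ :=
  ev (pderiv 0 p) x • ContinuousLinearMap.fst ℝ ℝ ℝ +
  ev (pderiv 1 p) x • ContinuousLinearMap.snd ℝ ℝ ℝ

lemma Dp_apply (p : MvPolynomial (Fin 2) ℝ) (x v : ℝ × ℝ) :
    Dp p x v = ev (pderiv 0 p) x * v.1 + ev (pderiv 1 p) x * v.2 := by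
  simp [Dp, smul_eq_mul]

lemma hasFDerivAt_ev (p : MvPolynomial (Fin 2) ℝ) (x : ℝ × ℝ) :
    HasFDerivAt (ev p) (Dp p x) x := by
  induction p using MvPolynomial.induction_on with
  | C a =>
    have h1 : ev (C a) = fun _ : ℝ × ℝ => a := by funext y; simp [ev]
    have h2 : Dp (C a) x = 0 := by
      apply ContinuousLinearMap.ext; intro v
      simp [Dp_apply, ev]
    rw [h1, h2]; exact hasFDerivAt_const _ _
  | add p q hp hq =>
    have h1 : ev (p + q) = fun y => ev p y + ev q y := by funext y; simp [ev]
    have h2 : Dp (p + q) x = Dp p x + Dp q x := by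
      apply ContinuousLinearMap.ext; intro v
      simp [Dp_apply, ev, map_add]; ring
    rw [h1, h2]; exact hp.add hq
  | mul_X p i hp =>
    fin_cases i
    · show HasFDerivAt (ev (p * X 0)) (Dp (p * X 0) x) x
      have h1 : ev (p * X 0) = fun y : ℝ × ℝ => ev p y * y.1 := by funext y; simp [ev]
      have h := hp.mul (hasFDerivAt_fst (p := x))
      have h2 : Dp (p * X 0) x =
          ev p x • ContinuousLinearMap.fst ℝ ℝ ℝ + x.1 • Dp p x := by
        apply ContinuousLinearMap.ext; intro v
        have e0 : pderiv (0 : Fin 2) (p * X 0) = pderiv 0 p * X 0 + p := by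
          simp [pderiv_mul]; ring
        have e1 : pderiv (1 : Fin 2) (p * X 0) = pderiv 1 p * X 0 := by
          simp [pderiv_mul, pderiv_X_of_ne (show (0:Fin 2) ≠ 1 by decide)]; ring
        simp [Dp_apply, e0, e1, ev, smul_eq_mul]
        ring
      rw [h1, h2]; exact h
    · show HasFDerivAt (ev (p * X 1)) (Dp (p * X 1) x) x
      have h1 : ev (p * X 1) = fun y : ℝ × ℝ => ev p y * y.2 := by funext y; simp [ev]
      have h := hp.mul (hasFDerivAt_snd (p := x))
      have h2 : Dp (p * X 1) x =
          ev p x • ContinuousLinearMap.snd ℝ ℝ ℝ + x.2 • Dp p x := by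
        apply ContinuousLinearMap.ext; intro v
        have e0 : pderiv (0 : Fin 2) (p * X 1) = pderiv 0 p * X 1 := by
          simp [pderiv_mul, pderiv_X_of_ne (show (1:Fin 2) ≠ 0 by decide)]; ring
        have e1 : pderiv (1 : Fin 2) (p * X 1) = pderiv 1 p * X 1 + p := by
          simp [pderiv_mul]; ring
        simp [Dp_apply, e0, e1, ev, smul_eq_mul]
        ring
      rw [h1, h2]; exact h

lemma fderiv_ev (p : MvPolynomial (Fin 2) ℝ) (x : ℝ × ℝ) :
    fderiv ℝ (ev p) x = Dp p x := (hasFDerivAt_ev p x).fderiv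

lemma totalDegree_pderiv_le (p : MvPolynomial (Fin 2) ℝ) (i : Fin 2) {d : ℕ}
    (h : p.totalDegree ≤ d + 1) : (pderiv i p).totalDegree ≤ d := by
  conv_lhs => rw [p.as_sum]
  rw [map_sum]
  refine le_trans (totalDegree_finset_sum _ _) (Finset.sup_le fun s hs => ?_)
  by_cases hsi : s i = 0
  · rw [pderiv_monomial, hsi]
    simp
  · rw [pderiv_monomial]
    refine le_trans (totalDegree_monomial_le _ _) ?_
    have hsum : (s.sum fun _ e => e) ≤ d + 1 := le_trans (le_totalDegree hs) h
    rw [Finsupp.sum_fintype _ _ (fun _ => rfl)] at hsum ⊢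
    rw [Fin.sum_univ_two] at hsum ⊢
    simp only [Finsupp.tsub_apply, Finsupp.single_apply]
    fin_cases i <;> simp_all <;> omega

lemma iter_congr {F' : Type*} [NormedAddCommGroup F'] [NormedSpace ℝ F'] {f g : ℝ × ℝ → F'}
    {x : ℝ × ℝ} (h : f =ᶠ[nhds x] g) (n : ℕ) :
    iteratedFDeriv ℝ n f x = iteratedFDeriv ℝ n g x := by
  rw [← iteratedFDerivWithin_univ, ← iteratedFDerivWithin_univ]
  exact Filter.EventuallyEq.iteratedFDerivWithin_eq
    (by simpa [nhdsWithin_univ] using h) h.self_of_nhds n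

lemma iter_zero_step {F' : Type*} [NormedAddCommGroup F'] [NormedSpace ℝ F']
    (f : ℝ × ℝ → F') (n : ℕ) (h : ∀ x, iteratedFDeriv ℝ n f x = 0) (x : ℝ × ℝ) :
    iteratedFDeriv ℝ (n + 1) f x = 0 := by
  rw [iteratedFDeriv_succ_eq_comp_left]
  have h0 : iteratedFDeriv ℝ n f = fun _ => 0 := funext h
  have h1 : fderiv ℝ (iteratedFDeriv ℝ n f) x = 0 := by
    rw [h0]; exact fderiv_const_apply 0
  show (continuousMultilinearCurryLeftEquiv ℝ (fun _ : Fin (n+1) => ℝ × ℝ) F').symm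
      (fderiv ℝ (iteratedFDeriv ℝ n f) x) = 0
  rw [h1]
  exact (continuousMultilinearCurryLeftEquiv ℝ (fun _ : Fin (n+1) => ℝ × ℝ) F').symm.map_zero

lemma iter_pair_zero (f g : ℝ × ℝ → ℝ) (hf : ContDiff ℝ ⊤ f) (hg : ContDiff ℝ ⊤ g) (n : ℕ)
    (x : ℝ × ℝ) (h1 : iteratedFDeriv ℝ n f x = 0) (h2 : iteratedFDeriv ℝ n g x = 0) :
    iteratedFDeriv ℝ n (fun y => (f y, g y)) x = 0 := by
  have hfg : ContDiff ℝ ⊤ (fun y => (f y, g y)) := hf.prodMk hg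
  have e1 := (ContinuousLinearMap.fst ℝ ℝ ℝ).iteratedFDeriv_comp_left (hfg.contDiffAt (x := x))
    (i := n) le_top
  have e2 := (ContinuousLinearMap.snd ℝ ℝ ℝ).iteratedFDeriv_comp_left (hfg.contDiffAt (x := x))
    (i := n) le_top
  have c1 : (⇑(ContinuousLinearMap.fst ℝ ℝ ℝ) ∘ fun y => (f y, g y)) = f := rfl
  have c2 : (⇑(ContinuousLinearMap.snd ℝ ℝ ℝ) ∘ fun y => (f y, g y)) = g := rfl
  rw [c1] at e1; rw [c2] at e2
  apply ContinuousMultilinearMap.ext; intro m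
  have p1 : (iteratedFDeriv ℝ n (fun y => (f y, g y)) x m).1 = 0 := by
    have := congrArg (fun T => T m) e1
    simp only [ContinuousLinearMap.compContinuousMultilinearMap_coe, Function.comp_apply] at this
    rw [h1] at this
    simpa using this.symm
  have p2 : (iteratedFDeriv ℝ n (fun y => (f y, g y)) x m).2 = 0 := by
    have := congrArg (fun T => T m) e2
    simp only [ContinuousLinearMap.compContinuousMultilinearMap_coe, Function.comp_apply] at this
    rw [h2] at this
    simpa using this.symm
  rw [ContinuousMultilinearMap.zero_apply]
  exact Prod.ext (by simpa using p1) (by simpa using p2)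

/-- The linear map `(a, b) ↦ a • fst + b • snd`. -/
def Phi : (ℝ × ℝ) →L[ℝ] ((ℝ × ℝ) →L[ℝ] ℝ) :=
  (ContinuousLinearMap.fst ℝ ℝ ℝ).smulRight (ContinuousLinearMap.fst ℝ ℝ ℝ) +
  (ContinuousLinearMap.snd ℝ ℝ ℝ).smulRight (ContinuousLinearMap.snd ℝ ℝ ℝ)

lemma Phi_apply (v : ℝ × ℝ) :
    Phi v = v.1 • ContinuousLinearMap.fst ℝ ℝ ℝ + v.2 • ContinuousLinearMap.snd ℝ ℝ ℝ := by
  simp [Phi]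

lemma vanish_ev (d : ℕ) : ∀ p : MvPolynomial (Fin 2) ℝ, p.totalDegree ≤ d →
    ∀ x, iteratedFDeriv ℝ (d + 1) (ev p) x = 0 := by
  induction d with
  | zero =>
    intro p hp x
    have hp0 : p.totalDegree = 0 := Nat.le_zero.mp hp
    have hd : ∀ i : Fin 2, pderiv i p = 0 := by
      intro i
      have := (totalDegree_eq_zero_iff (Fin 2) p).mp hp0
      rw [p.as_sum, map_sum]
      refine Finset.sum_eq_zero fun s hs => ?_
      rw [pderiv_monomial, this s hs i]
      simp
    rw [iteratedFDeriv_succ_eq_comp_right]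
    have hfd : (fun y => fderiv ℝ (ev p) y) = fun _ => (0 : (ℝ × ℝ) →L[ℝ] ℝ) := by
      funext y
      rw [fderiv_ev]
      apply ContinuousLinearMap.ext; intro v
      simp [Dp_apply, hd, ev]
    show (continuousMultilinearCurryRightEquiv' ℝ 0 (ℝ × ℝ) ℝ).symm
        (iteratedFDeriv ℝ 0 (fun y => fderiv ℝ (ev p) y) x) = 0
    rw [hfd]
    have h00 : iteratedFDeriv ℝ 0 (fun _ : ℝ × ℝ => (0 : (ℝ × ℝ) →L[ℝ] ℝ)) x = 0 := by
      apply ContinuousMultilinearMap.ext; intro m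
      rw [iteratedFDeriv_zero_apply, ContinuousMultilinearMap.zero_apply]
    rw [h00]
    exact (continuousMultilinearCurryRightEquiv' ℝ 0 (ℝ × ℝ) ℝ).symm.map_zero
  | succ d ih =>
    intro p hp x
    rw [iteratedFDeriv_succ_eq_comp_right]
    have hpair : ContDiff ℝ ⊤ (fun y => (ev (pderiv 0 p) y, ev (pderiv 1 p) y)) :=
      (contDiff_ev _).prodMk (contDiff_ev _)
    have hfd : (fun y => fderiv ℝ (ev p) y) =
        ⇑Phi ∘ (fun y => (ev (pderiv 0 p) y, ev (pderiv 1 p) y)) := by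
      funext y
      rw [fderiv_ev]
      simp only [Function.comp_apply, Phi_apply]
      rfl
    rw [hfd]
    have hcomp := Phi.iteratedFDeriv_comp_left (hpair.contDiffAt (x := x)) (i := d + 1) le_top
    have hz : iteratedFDeriv ℝ (d + 1) (fun y => (ev (pderiv 0 p) y, ev (pderiv 1 p) y)) x = 0 :=
      iter_pair_zero _ _ (contDiff_ev _) (contDiff_ev _) _ _
        (ih _ (totalDegree_pderiv_le p 0 hp) x) (ih _ (totalDegree_pderiv_le p 1 hp) x)
    show (continuousMultilinearCurryRightEquiv' ℝ (d+1) (ℝ × ℝ) ℝ).symm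
        (iteratedFDeriv ℝ (d+1)
          (⇑Phi ∘ fun y => (ev (pderiv 0 p) y, ev (pderiv 1 p) y)) x) = 0
    rw [hcomp, hz]
    have hz0 : Phi.compContinuousMultilinearMap
        (0 : ContinuousMultilinearMap ℝ (fun _ : Fin (d+1) => ℝ × ℝ) (ℝ × ℝ)) = 0 := by
      apply ContinuousMultilinearMap.ext; intro m
      simp [ContinuousLinearMap.compContinuousMultilinearMap_coe]
    rw [hz0]
    exact (continuousMultilinearCurryRightEquiv' ℝ (d+1) (ℝ × ℝ) ℝ).symm.map_zero

lemma vanish_ev' (d : ℕ) (p : MvPolynomial (Fin 2) ℝ) (hp : p.totalDegree ≤ d) :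
    ∀ n, d < n → ∀ x, iteratedFDeriv ℝ n (ev p) x = 0 := by
  intro n
  induction n with
  | zero => exact fun hdn => (Nat.not_lt_zero d hdn).elim
  | succ n ihn =>
    intro hdn x
    rcases Nat.lt_or_ge d n with hn | hn
    · exact iter_zero_step _ _ (ihn hn) x
    · have hnd : n = d := by omega
      subst hnd
      exact vanish_ev n p hp x

/-- Trace of a continuous linear operator on `ℝ × ℝ`. -/
def trCLM : ((ℝ × ℝ) →L[ℝ] (ℝ × ℝ)) →L[ℝ] ℝ :=
  (ContinuousLinearMap.fst ℝ ℝ ℝ).comp (ContinuousLinearMap.apply ℝ (ℝ × ℝ) ((1:ℝ), (0:ℝ))) +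
  (ContinuousLinearMap.snd ℝ ℝ ℝ).comp (ContinuousLinearMap.apply ℝ (ℝ × ℝ) ((0:ℝ), (1:ℝ)))

lemma trCLM_apply (A : (ℝ × ℝ) →L[ℝ] (ℝ × ℝ)) :
    trCLM A = (A (1, 0)).1 + (A (0, 1)).2 := by
  simp [trCLM]

/-- The adjugate, as a continuous linear map on operators. -/
def adjCLM : ((ℝ × ℝ) →L[ℝ] (ℝ × ℝ)) →L[ℝ] ((ℝ × ℝ) →L[ℝ] (ℝ × ℝ)) :=
  trCLM.smulRight (ContinuousLinearMap.id ℝ (ℝ × ℝ)) -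
    ContinuousLinearMap.id ℝ ((ℝ × ℝ) →L[ℝ] (ℝ × ℝ))

lemma adjCLM_apply (A : (ℝ × ℝ) →L[ℝ] (ℝ × ℝ)) :
    adjCLM A = trCLM A • ContinuousLinearMap.id ℝ (ℝ × ℝ) - A := by
  simp [adjCLM]

lemma clm_apply_eq (A : (ℝ × ℝ) →L[ℝ] (ℝ × ℝ)) (v : ℝ × ℝ) :
    A v = v.1 • A (1, 0) + v.2 • A (0, 1) := by
  have hv : v = v.1 • ((1:ℝ), (0:ℝ)) + v.2 • ((0:ℝ), (1:ℝ)) := by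
    apply Prod.ext <;> simp
  calc A v = A (v.1 • ((1:ℝ), (0:ℝ)) + v.2 • ((0:ℝ), (1:ℝ))) := by rw [← hv]
  _ = v.1 • A (1, 0) + v.2 • A (0, 1) := by rw [map_add, A.map_smul, A.map_smul]

lemma det_clm (A : (ℝ × ℝ) →L[ℝ] (ℝ × ℝ)) :
    LinearMap.det ((A : (ℝ × ℝ) →ₗ[ℝ] (ℝ × ℝ))) =
      (A (1, 0)).1 * (A (0, 1)).2 - (A (0, 1)).1 * (A (1, 0)).2 := by
  rw [← LinearMap.det_toMatrix (Module.Basis.finTwoProd ℝ), Matrix.det_fin_two]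
  simp [LinearMap.toMatrix_apply, Module.Basis.finTwoProd_zero, Module.Basis.finTwoProd_one,
    Module.Basis.coe_finTwoProd_repr]

lemma cayley (A : (ℝ × ℝ) →L[ℝ] (ℝ × ℝ)) :
    adjCLM A * A = LinearMap.det ((A : (ℝ × ℝ) →ₗ[ℝ] (ℝ × ℝ))) • (1 : (ℝ × ℝ) →L[ℝ] (ℝ × ℝ)) := by
  apply ContinuousLinearMap.ext; intro v
  have h2 : A (A v) = (A v).1 • A (1, 0) + (A v).2 • A (0, 1) := clm_apply_eq A (A v)
  have hv : A v = v.1 • A (1, 0) + v.2 • A (0, 1) := clm_apply_eq A v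
  rw [ContinuousLinearMap.mul_apply, adjCLM_apply]
  simp only [ContinuousLinearMap.sub_apply, ContinuousLinearMap.smul_apply,
    ContinuousLinearMap.coe_id', id_eq, ContinuousLinearMap.smul_apply,
    ContinuousLinearMap.one_apply]
  rw [h2, hv, trCLM_apply, det_clm]
  apply Prod.ext <;> simp [smul_eq_mul] <;> ring

lemma isUnit_clm {A : (ℝ × ℝ) →L[ℝ] (ℝ × ℝ)}
    (hA : LinearMap.det ((A : (ℝ × ℝ) →ₗ[ℝ] (ℝ × ℝ))) ≠ 0) : IsUnit A := by
  have hA' : IsUnit ((LinearMap.toMatrix (Module.Basis.finTwoProd ℝ) (Module.Basis.finTwoProd ℝ))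
      ((A : (ℝ × ℝ) →ₗ[ℝ] (ℝ × ℝ)))).det := by
    rw [LinearMap.det_toMatrix]; exact isUnit_iff_ne_zero.2 hA
  let e := (LinearEquiv.ofIsUnitDet hA').toContinuousLinearEquiv
  have hcoe : ∀ w, e w = A w := by
    intro w
    have h1 := LinearEquiv.coe_ofIsUnitDet hA'
    have h3 : ((LinearEquiv.ofIsUnitDet hA' : (ℝ × ℝ) →ₗ[ℝ] (ℝ × ℝ))) w
        = ((A : (ℝ × ℝ) →ₗ[ℝ] (ℝ × ℝ))) w := by rw [h1]
    have h4 : e w = ((LinearEquiv.ofIsUnitDet hA' : (ℝ × ℝ) →ₗ[ℝ] (ℝ × ℝ))) w := rfl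
    rw [h4, h3]; rfl
  refine ⟨⟨A, (e.symm : (ℝ × ℝ) →L[ℝ] (ℝ × ℝ)), ?_, ?_⟩, rfl⟩
  · apply ContinuousLinearMap.ext; intro v
    rw [ContinuousLinearMap.mul_apply, ContinuousLinearMap.one_apply]
    show A (e.symm v) = v
    rw [← hcoe]; exact e.apply_symm_apply v
  · apply ContinuousLinearMap.ext; intro v
    rw [ContinuousLinearMap.mul_apply, ContinuousLinearMap.one_apply]
    show (e.symm : (ℝ × ℝ) →L[ℝ] (ℝ × ℝ)) (A v) = v
    rw [← hcoe]; exact e.symm_apply_apply v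

set_option synthInstance.maxHeartbeats 1000000 in
lemma smul_inverse_eq_adj {A : (ℝ × ℝ) →L[ℝ] (ℝ × ℝ)}
    (hA : LinearMap.det ((A : (ℝ × ℝ) →ₗ[ℝ] (ℝ × ℝ))) ≠ 0) :
    LinearMap.det ((A : (ℝ × ℝ) →ₗ[ℝ] (ℝ × ℝ))) • Ring.inverse A = adjCLM A := by
  have hu : IsUnit A := isUnit_clm hA
  have hinv : A * Ring.inverse A = 1 := Ring.mul_inverse_cancel A hu
  calc LinearMap.det ((A : (ℝ × ℝ) →ₗ[ℝ] (ℝ × ℝ))) • Ring.inverse A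
      = (LinearMap.det ((A : (ℝ × ℝ) →ₗ[ℝ] (ℝ × ℝ))) • (1 : (ℝ × ℝ) →L[ℝ] (ℝ × ℝ))) *
        Ring.inverse A := by rw [smul_mul_assoc, one_mul]
  _ = (adjCLM A * A) * Ring.inverse A := by rw [cayley]
  _ = adjCLM A * (A * Ring.inverse A) := by rw [mul_assoc]
  _ = adjCLM A := by rw [hinv, mul_one]

/-- The entries of the adjugate as polynomials. -/
def Bpoly (P Q : MvPolynomial (Fin 2) ℝ) : Fin 2 → Fin 2 → MvPolynomial (Fin 2) ℝ
  | 0, 0 => pderiv 1 Q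
  | 0, 1 => -(pderiv 1 P)
  | 1, 0 => -(pderiv 0 Q)
  | 1, 1 => pderiv 0 P

/-- Bound `|B|_{W^{m,∞}(T̂)} ≤ C h^{1+m}` for `B = det DF · (DF)⁻¹` (the adjugate of `DF`),
together with the fact that the entries of `B` are polynomials of total degree ≤ k−1, so
that all derivatives of order ≥ k vanish. -/

theorem stmt1 (k m : ℕ) (hk : 2 ≤ k) (hm : m ≤ k - 1) (CF c₁ c₂ : ℝ)
    (hCF : 0 < CF) (hc₁ : 0 < c₁) (hc₂ : 0 < c₂) :
    ∃ C : ℝ, 0 < C ∧ ∀ h : ℝ, h ∈ Set.Ioc (0 : ℝ) 1 → ∀ F : ℝ × ℝ → ℝ × ℝ,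
      IsPolyMap k F → Set.InjOn F (closure Tref) →
      (∀ r : ℕ, r ≤ k → ∀ x ∈ Tref, ‖iteratedFDeriv ℝ r F x‖ ≤ CF * h ^ r) →
      (∀ x ∈ closure Tref, c₁ * h ^ 2 ≤ jacDet F x ∧ jacDet F x ≤ c₂ * h ^ 2) →
      (∀ x ∈ Tref, ‖iteratedFDeriv ℝ m (Bmap F) x‖ ≤ C * h ^ (1 + m)) ∧
      (∃ P : Fin 2 → Fin 2 → MvPolynomial (Fin 2) ℝ,
        (∀ i j : Fin 2, (P i j).totalDegree ≤ k - 1) ∧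
        (∀ x ∈ closure Tref,
          Bmap F x (1, 0) =
            (MvPolynomial.eval ![x.1, x.2] (P 0 0), MvPolynomial.eval ![x.1, x.2] (P 1 0)) ∧
          Bmap F x (0, 1) =
            (MvPolynomial.eval ![x.1, x.2] (P 0 1), MvPolynomial.eval ![x.1, x.2] (P 1 1)))) ∧
      (∀ x ∈ Tref, ∀ r : ℕ, k ≤ r → iteratedFDeriv ℝ r (Bmap F) x = 0) := by
  refine ⟨(‖adjCLM‖ + 1) * CF, by positivity, ?_⟩
  intro h hh F hFpoly hFinj hFder hFdet
  obtain ⟨P, Q, hPdeg, hQdeg, hFPQ⟩ := hFpoly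
  have hFfun : F = fun y => (ev P y, ev Q y) := funext fun y => hFPQ y
  have hFcd : ContDiff ℝ ⊤ F := by
    rw [hFfun]; exact (contDiff_ev P).prodMk (contDiff_ev Q)
  have hfdcd : ContDiff ℝ ⊤ (fderiv ℝ F) := hFcd.fderiv_right (by simp)
  have hdetne : ∀ x ∈ closure Tref,
      LinearMap.det ((fderiv ℝ F x : (ℝ × ℝ) →ₗ[ℝ] (ℝ × ℝ))) ≠ 0 := by
    intro x hx
    have h1 := (hFdet x hx).1
    have h2 : (0:ℝ) < c₁ * h ^ 2 := by
      have := hh.1; positivity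
    exact ne_of_gt (lt_of_lt_of_le h2 h1)
  have hBeqcl : ∀ x ∈ closure Tref, Bmap F x = adjCLM (fderiv ℝ F x) := by
    intro x hx
    have := smul_inverse_eq_adj (hdetne x hx)
    simpa [Bmap, jacDet] using this
  have hopen : IsOpen Tref := by
    have hT : Tref = {x : ℝ × ℝ | 0 < x.1} ∩ ({x | 0 < x.2} ∩ {x | x.1 + x.2 < 1}) := by
      ext y; simp [Tref, and_assoc]
    rw [hT]
    exact (isOpen_lt continuous_const continuous_fst).inter
      ((isOpen_lt continuous_const continuous_snd).inter
        (isOpen_lt (continuous_fst.add continuous_snd) continuous_const))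
  have hBev : ∀ x ∈ Tref, Bmap F =ᶠ[nhds x] (⇑adjCLM ∘ fderiv ℝ F) := by
    intro x hx
    filter_upwards [hopen.mem_nhds hx] with y hy
    exact hBeqcl y (subset_closure hy)
  refine ⟨?_, ?_, ?_⟩
  · -- the W^{m,∞} bound
    intro x hx
    have e1 : iteratedFDeriv ℝ m (Bmap F) x = iteratedFDeriv ℝ m (⇑adjCLM ∘ fderiv ℝ F) x :=
      iter_congr (hBev x hx) m
    have e2 := adjCLM.iteratedFDeriv_comp_left (hfdcd.contDiffAt (x := x)) (i := m) le_top
    rw [e1, e2]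
    have h0 : (0:ℝ) < h := hh.1
    calc ‖adjCLM.compContinuousMultilinearMap (iteratedFDeriv ℝ m (fderiv ℝ F) x)‖
        ≤ ‖adjCLM‖ * ‖iteratedFDeriv ℝ m (fderiv ℝ F) x‖ :=
          ContinuousLinearMap.norm_compContinuousMultilinearMap_le _ _
    _ = ‖adjCLM‖ * ‖iteratedFDeriv ℝ (m+1) F x‖ := by rw [norm_iteratedFDeriv_fderiv]
    _ ≤ ‖adjCLM‖ * (CF * h ^ (m+1)) :=
          mul_le_mul_of_nonneg_left (hFder (m+1) (by omega) x hx) (ContinuousLinearMap.opNorm_nonneg _)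
    _ ≤ ((‖adjCLM‖ + 1) * CF) * h ^ (1+m) := by
          rw [add_comm 1 m]
          have h1 : ‖adjCLM‖ ≤ ‖adjCLM‖ + 1 := by linarith
          have h2 : (0:ℝ) ≤ CF * h ^ (m+1) := by positivity
          calc ‖adjCLM‖ * (CF * h ^ (m+1)) ≤ (‖adjCLM‖ + 1) * (CF * h ^ (m+1)) :=
                mul_le_mul_of_nonneg_right h1 h2
          _ = ((‖adjCLM‖ + 1) * CF) * h ^ (m+1) := by ring
  · -- entries of B are polynomials of degree ≤ k - 1
    refine ⟨Bpoly P Q, ?_, ?_⟩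
    · intro i j
      have hQ' : Q.totalDegree ≤ (k-1) + 1 := by have := hQdeg; omega
      have hP' : P.totalDegree ≤ (k-1) + 1 := by have := hPdeg; omega
      fin_cases i <;> fin_cases j <;> simp only [Bpoly, totalDegree_neg]
      · exact totalDegree_pderiv_le _ _ hQ'
      · exact totalDegree_pderiv_le _ _ hP'
      · exact totalDegree_pderiv_le _ _ hQ'
      · exact totalDegree_pderiv_le _ _ hP'
    · intro x hx
      have hB := hBeqcl x hx
      have hDF : fderiv ℝ F x = (Dp P x).prod (Dp Q x) := by
        have h1 : HasFDerivAt F ((Dp P x).prod (Dp Q x)) x := by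
          rw [hFfun]; exact (hasFDerivAt_ev P x).prodMk (hasFDerivAt_ev Q x)
        exact h1.fderiv
      have hA1 : ((Dp P x).prod (Dp Q x)) ((1:ℝ), (0:ℝ))
          = (ev (pderiv 0 P) x, ev (pderiv 0 Q) x) := by
        apply Prod.ext <;> simp [ContinuousLinearMap.prod_apply, Dp_apply]
      have hA2 : ((Dp P x).prod (Dp Q x)) ((0:ℝ), (1:ℝ))
          = (ev (pderiv 1 P) x, ev (pderiv 1 Q) x) := by
        apply Prod.ext <;> simp [ContinuousLinearMap.prod_apply, Dp_apply]
      have htr : trCLM ((Dp P x).prod (Dp Q x)) = ev (pderiv 0 P) x + ev (pderiv 1 Q) x := by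
        rw [trCLM_apply, hA1, hA2]
      rw [hB, adjCLM_apply, hDF]
      constructor
      · rw [ContinuousLinearMap.sub_apply, ContinuousLinearMap.smul_apply, htr, hA1]
        apply Prod.ext <;>
          simp only [Bpoly, ContinuousLinearMap.coe_id', id_eq, Prod.smul_fst, Prod.smul_snd,
            Prod.fst_sub, Prod.snd_sub, smul_eq_mul, map_neg, ev] <;> ring
      · rw [ContinuousLinearMap.sub_apply, ContinuousLinearMap.smul_apply, htr, hA2]
        apply Prod.ext <;>
          simp only [Bpoly, ContinuousLinearMap.coe_id', id_eq, Prod.smul_fst, Prod.smul_snd,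
            Prod.fst_sub, Prod.snd_sub, smul_eq_mul, map_neg, ev] <;> ring
  · -- vanishing of high derivatives
    intro x hx r hr
    have e1 : iteratedFDeriv ℝ r (Bmap F) x = iteratedFDeriv ℝ r (⇑adjCLM ∘ fderiv ℝ F) x :=
      iter_congr (hBev x hx) r
    have e2 := adjCLM.iteratedFDeriv_comp_left (hfdcd.contDiffAt (x := x)) (i := r) le_top
    rw [e1, e2]
    have hF0 : iteratedFDeriv ℝ (r+1) F x = 0 := by
      rw [hFfun]
      exact iter_pair_zero _ _ (contDiff_ev P) (contDiff_ev Q) _ _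
        (vanish_ev' k P hPdeg (r+1) (by omega) x)
        (vanish_ev' k Q hQdeg (r+1) (by omega) x)
    have hz : iteratedFDeriv ℝ r (fderiv ℝ F) x = 0 := by
      have hnorm : ‖iteratedFDeriv ℝ r (fderiv ℝ F) x‖ = 0 := by
        rw [norm_iteratedFDeriv_fderiv, hF0, norm_zero]
      exact norm_eq_zero.mp hnorm
    rw [hz]
    apply ContinuousMultilinearMap.ext; intro m'
    simp [ContinuousLinearMap.compContinuousMultilinearMap_coe]
end
end

section
/- Let k ≥ 2 be an integer and let F : ℝ² → ℝ² be a map with polynomial components of total degree ≤ k that is injective on the closure of T̂ and satisfies det DF(x) ≠ 0 for all x in the closure of T̂. Let ê be one of the three closed edges of T̂, suppose the restriction of F to ê coincides with the restriction of an affine map, and let e := F(ê) (a straight segment) with n a unit vector normal to the line containing e. Let v̂ : ℝ² → ℝ² have polynomial components of total degree ≤ k, and define ṽ on F(closure of T̂) by ṽ(F(x̂)) = A(x̂)v̂(x̂), where A(x̂) := DF(x̂)/det DF(x̂). Then there exists a polynomial P in two variables of total degree ≤ k such that ṽ(x)·n = P(x) for every x ∈ e. -/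
open Set MeasureTheory Function

noncomputable section

lemma Tref_convex : Convex ℝ Tref := by
  have h : Tref = {x : ℝ × ℝ | 0 < x.1} ∩ ({x : ℝ × ℝ | 0 < x.2} ∩ {x : ℝ × ℝ | x.1 + x.2 < 1}) := by
    ext x; simp [Tref, and_assoc]
  rw [h]
  refine (convex_halfSpace_gt (LinearMap.isLinear (LinearMap.fst ℝ ℝ ℝ)) 0).inter
    ((convex_halfSpace_gt (LinearMap.isLinear (LinearMap.snd ℝ ℝ ℝ)) 0).inter
      (convex_halfSpace_lt (LinearMap.isLinear (LinearMap.fst ℝ ℝ ℝ + LinearMap.snd ℝ ℝ ℝ)) 1))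

lemma mem_closure_Tref (v : ℝ × ℝ)
    (hv : ∀ ε : ℝ, 0 < ε → ε ≤ 1 → v + ε • (((1:ℝ)/4, (1:ℝ)/4) - v) ∈ Tref) :
    v ∈ closure Tref := by
  have ht : Filter.Tendsto (fun m : ℕ => v + ((m:ℝ)+1)⁻¹ • (((1:ℝ)/4, (1:ℝ)/4) - v))
      Filter.atTop (nhds v) := by
    have h0 : Filter.Tendsto (fun m : ℕ => ((m:ℝ)+1)⁻¹) Filter.atTop (nhds 0) := by
      simpa [one_div] using tendsto_one_div_add_atTop_nhds_zero_nat (𝕜 := ℝ)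
    have := (h0.smul_const (((1:ℝ)/4, (1:ℝ)/4) - v)).const_add v
    simpa using this
  refine mem_closure_of_tendsto ht (Filter.Eventually.of_forall fun m => ?_)
  refine hv _ (by positivity) ?_
  rw [inv_le_one_iff₀]
  right; linarith [Nat.cast_nonneg (α := ℝ) m]

lemma vtx_mem_closure (j : Fin 3) : vtx j ∈ closure Tref := by
  fin_cases j <;>
  · refine mem_closure_Tref _ fun ε hε0 hε1 => ?_
    refine ⟨?_, ?_, ?_⟩ <;>
    · simp only [vtx, Tref, mem_setOf_eq, Matrix.cons_val_zero, Matrix.cons_val_one,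
        Matrix.head_cons, Matrix.cons_val_two, Matrix.tail_cons, Prod.fst_add, Prod.snd_add,
        Prod.smul_fst, Prod.smul_snd, Prod.fst_sub, Prod.snd_sub, smul_eq_mul, Fin.isValue]
      norm_num
      nlinarith

lemma polyDiff (P : MvPolynomial (Fin 2) ℝ) :
    Differentiable ℝ (fun x : ℝ × ℝ => MvPolynomial.eval ![x.1, x.2] P) := by
  intro x
  have h : ∀ i : Fin 2, AnalyticAt ℝ (fun x : ℝ × ℝ => (![x.1, x.2] : Fin 2 → ℝ) i) x := by
    intro i
    fin_cases i
    · simpa using (ContinuousLinearMap.fst ℝ ℝ ℝ).analyticAt x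
    · simpa using (ContinuousLinearMap.snd ℝ ℝ ℝ).analyticAt x
  have h2 := (AnalyticAt.aeval_mvPolynomial (𝕜 := ℝ)
      (f := fun x : ℝ × ℝ => (![x.1, x.2] : Fin 2 → ℝ)) h P).differentiableAt
  have he : ∀ g : Fin 2 → ℝ, (MvPolynomial.aeval g) P = MvPolynomial.eval g P := fun g => by
    rw [← MvPolynomial.coe_aeval_eq_eval]; rfl
  simpa [he] using h2

lemma tdeg_aeval_le {g : Fin 2 → MvPolynomial (Fin 2) ℝ} (hg : ∀ i, (g i).totalDegree ≤ 1)
    (p : MvPolynomial (Fin 2) ℝ) :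
    (MvPolynomial.aeval g p).totalDegree ≤ p.totalDegree := by
  conv_lhs => rw [p.as_sum]
  rw [map_sum]
  refine (MvPolynomial.totalDegree_finset_sum _ _).trans (Finset.sup_le fun v hv => ?_)
  rw [MvPolynomial.aeval_monomial]
  refine (MvPolynomial.totalDegree_mul _ _).trans ?_
  have h1 : (algebraMap ℝ (MvPolynomial (Fin 2) ℝ) (MvPolynomial.coeff v p)).totalDegree = 0 :=
    MvPolynomial.totalDegree_C _
  rw [h1, zero_add]
  refine le_trans ?_ (MvPolynomial.le_totalDegree hv)
  rw [Finsupp.prod]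
  refine (MvPolynomial.totalDegree_finset_prod _ _).trans ?_
  rw [Finsupp.sum]
  refine Finset.sum_le_sum fun i hi => ?_
  exact (MvPolynomial.totalDegree_pow _ _).trans (by
    calc v i * (g i).totalDegree ≤ v i * 1 := Nat.mul_le_mul_left _ (hg i)
    _ = v i := mul_one _)

lemma fderiv_segment {F : ℝ × ℝ → ℝ × ℝ} (hFd : Differentiable ℝ F)
    {L : (ℝ × ℝ) →ᵃ[ℝ] (ℝ × ℝ)} {a b : ℝ × ℝ}
    (hL : ∀ x ∈ segment ℝ a b, F x = L x) {x : ℝ × ℝ} (hx : x ∈ segment ℝ a b) :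
    fderiv ℝ F x (b - a) = L.linear (b - a) := by
  rw [segment_eq_image'] at hx
  obtain ⟨t, ht, rfl⟩ := hx
  set γ : ℝ → ℝ × ℝ := fun s => a + s • (b - a) with hγ
  have hγd : HasDerivAt γ (b - a) t := by
    simpa [hγ] using ((hasDerivAt_id t).smul_const (b - a)).const_add a
  have h1 : HasDerivWithinAt (F ∘ γ) (fderiv ℝ F (γ t) (b - a)) (Set.Icc 0 1) t :=
    (((hFd (γ t)).hasFDerivAt).comp_hasDerivAt t hγd).hasDerivWithinAt
  have hmem : ∀ s ∈ Set.Icc (0:ℝ) 1, γ s ∈ segment ℝ a b := fun s hs => by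
    rw [segment_eq_image']; exact ⟨s, hs, rfl⟩
  have hLd : HasDerivAt (fun s => L (γ s)) (L.linear (b - a)) t := by
    have heq : (fun s => L (γ s)) = fun s => s • L.linear (b - a) + L a := by
      funext s
      show L (a + s • (b - a)) = _
      rw [add_comm a (s • (b - a)), ← vadd_eq_add, AffineMap.map_vadd, L.linear.map_smul,
        vadd_eq_add]
    rw [heq]
    simpa using ((hasDerivAt_id t).smul_const (L.linear (b - a))).add_const (L a)
  have h2 : HasDerivWithinAt (F ∘ γ) (L.linear (b - a)) (Set.Icc 0 1) t :=
    (hLd.hasDerivWithinAt).congr (fun s hs => hL _ (hmem s hs)) (hL _ (hmem t ht))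
  have hu := uniqueDiffOn_Icc (zero_lt_one) t ht
  exact (h1.derivWithin hu).symm.trans (h2.derivWithin hu)

lemma jacDet_eq (F : ℝ × ℝ → ℝ × ℝ) (x : ℝ × ℝ) :
    jacDet F x = (fderiv ℝ F x (1, 0)).1 * (fderiv ℝ F x (0, 1)).2
      - (fderiv ℝ F x (0, 1)).1 * (fderiv ℝ F x (1, 0)).2 := by
  rw [jacDet, ← LinearMap.det_toMatrix (Module.Basis.finTwoProd ℝ), Matrix.det_fin_two]
  simp [LinearMap.toMatrix_apply, Module.Basis.coe_finTwoProd_repr, Module.Basis.finTwoProd_zero,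
    Module.Basis.finTwoProd_one]


set_option maxHeartbeats 1000000 in
/-- On a straight edge `e = F(ê)` (where `F` is affine on the edge `ê` of the reference
triangle), the normal component of the Piola transform is a polynomial of degree ≤ k. -/
theorem stmt6 (k : ℕ) (hk : 2 ≤ k) (F : ℝ × ℝ → ℝ × ℝ) (hF : IsPolyMap k F)
    (hinj : Set.InjOn F (closure Tref))
    (hdet : ∀ x ∈ closure Tref, jacDet F x ≠ 0)
    (i : Fin 3)
    (L : (ℝ × ℝ) →ᵃ[ℝ] (ℝ × ℝ))
    (hL : ∀ x ∈ segment ℝ (vtx i) (vtx (i + 1)), F x = L x)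
    (n : ℝ × ℝ) (hn : n.1 ^ 2 + n.2 ^ 2 = 1)
    (hperp : ∀ x ∈ segment ℝ (vtx i) (vtx (i + 1)),
      ∀ y ∈ segment ℝ (vtx i) (vtx (i + 1)),
        (F x - F y).1 * n.1 + (F x - F y).2 * n.2 = 0)
    (vhat : ℝ × ℝ → ℝ × ℝ) (hvhat : IsPolyMap k vhat)
    (vtil : ℝ × ℝ → ℝ × ℝ) (hpiola : IsPiola F vhat vtil) :
    ∃ P : MvPolynomial (Fin 2) ℝ, P.totalDegree ≤ k ∧
      ∀ y ∈ F '' segment ℝ (vtx i) (vtx (i + 1)),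
        (vtil y).1 * n.1 + (vtil y).2 * n.2 = MvPolynomial.eval ![y.1, y.2] P := by
  classical
  set a := vtx i with ha
  set b := vtx (i + 1) with hb
  set τ : ℝ × ℝ := b - a with hτdef
  set d : ℝ × ℝ := F b - F a with hddef
  set c : ℝ := n.1 * d.2 - n.2 * d.1 with hcdef
  have haC : a ∈ closure Tref := vtx_mem_closure i
  have hbC : b ∈ closure Tref := vtx_mem_closure (i + 1)
  have hseg : segment ℝ a b ⊆ closure Tref :=
    (Tref_convex.closure).segment_subset haC hbC
  have hab : a ≠ b := by
    rw [ha, hb]; fin_cases i <;> simp [vtx] <;> norm_num [Prod.ext_iff]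
  -- perpendicularity of d and n
  have hdperp : d.1 * n.1 + d.2 * n.2 = 0 := by
    have := hperp b (right_mem_segment ℝ a b) a (left_mem_segment ℝ a b)
    simpa [hddef] using this
  have hd0 : d ≠ 0 := by
    rw [hddef, sub_ne_zero]
    intro h
    exact hab (hinj hbC haC h).symm
  have hcn1 : c * n.1 = d.2 := by
    rw [hcdef]; linear_combination d.2 * hn - n.2 * hdperp
  have hcn2 : c * n.2 = -d.1 := by
    rw [hcdef]; linear_combination (-d.1) * hn + n.1 * hdperp
  have hc0 : c ≠ 0 := by
    intro h
    apply hd0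
    have e1 : d.1 = 0 := by have := hcn2; rw [h] at this; linarith [this]
    have e2 : d.2 = 0 := by have := hcn1; rw [h] at this; linarith [this]
    exact Prod.ext e1 e2
  -- differentiability of F
  obtain ⟨PF, QF, _, _, hFeq⟩ := hF
  have hFdiff : Differentiable ℝ F := by
    have hFfun : F = fun x => (MvPolynomial.eval ![x.1, x.2] PF,
        MvPolynomial.eval ![x.1, x.2] QF) := funext hFeq
    rw [hFfun]
    exact (polyDiff PF).prodMk (polyDiff QF)
  -- derivative along the edge
  have hMτ : ∀ x ∈ segment ℝ a b, fderiv ℝ F x τ = d := by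
    intro x hx
    rw [hτdef, fderiv_segment hFdiff hL hx]
    have h1 : L.linear (b - a) = L b - L a := by
      simpa [vsub_eq_sub] using L.linearMap_vsub b a
    rw [h1, hddef, hL b (right_mem_segment ℝ a b), hL a (left_mem_segment ℝ a b)]
  -- the polynomial data of vhat
  obtain ⟨Pv, Qv, hPvd, hQvd, hveq⟩ := hvhat
  -- the polynomial G with eval G at x̂ = -c⁻¹ * cross(τ, vhat x̂)
  set G : MvPolynomial (Fin 2) ℝ :=
    MvPolynomial.C (-(c⁻¹)) * (MvPolynomial.C τ.1 * Qv - MvPolynomial.C τ.2 * Pv) with hGdef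
  have hGdeg : G.totalDegree ≤ k := by
    refine (MvPolynomial.totalDegree_mul _ _).trans ?_
    rw [MvPolynomial.totalDegree_C, zero_add]
    refine (MvPolynomial.totalDegree_sub _ _).trans (max_le ?_ ?_)
    · refine (MvPolynomial.totalDegree_mul _ _).trans ?_
      rw [MvPolynomial.totalDegree_C, zero_add]; exact hQvd
    · refine (MvPolynomial.totalDegree_mul _ _).trans ?_
      rw [MvPolynomial.totalDegree_C, zero_add]; exact hPvd
  -- the affine substitution y ↦ γ(T(y))
  set p0 : ℝ × ℝ := F a with hp0def
  set subst : Fin 2 → MvPolynomial (Fin 2) ℝ := fun j =>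
    MvPolynomial.C ((![a.1, a.2] j) - (p0.1 * d.1 + p0.2 * d.2) * (![τ.1, τ.2] j) / c ^ 2)
      + MvPolynomial.C (d.1 * (![τ.1, τ.2] j) / c ^ 2) * MvPolynomial.X 0
      + MvPolynomial.C (d.2 * (![τ.1, τ.2] j) / c ^ 2) * MvPolynomial.X 1 with hsubstdef
  have hsubstdeg : ∀ j, (subst j).totalDegree ≤ 1 := by
    intro j
    refine (MvPolynomial.totalDegree_add _ _).trans (max_le ((MvPolynomial.totalDegree_add _ _).trans (max_le ?_ ?_)) ?_)
    · rw [MvPolynomial.totalDegree_C]; omega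
    · refine (MvPolynomial.totalDegree_mul _ _).trans ?_
      rw [MvPolynomial.totalDegree_C, MvPolynomial.totalDegree_X]
    · refine (MvPolynomial.totalDegree_mul _ _).trans ?_
      rw [MvPolynomial.totalDegree_C, MvPolynomial.totalDegree_X]
  refine ⟨MvPolynomial.aeval subst G, (tdeg_aeval_le hsubstdeg G).trans hGdeg, ?_⟩
  rintro y ⟨x, hx, rfl⟩
  have hxC : x ∈ closure Tref := hseg hx
  -- get the parameter t
  obtain ⟨t, ht, hxt⟩ := (segment_eq_image' ℝ a b ▸ hx : x ∈ (fun θ : ℝ => a + θ • (b - a)) '' Icc (0:ℝ) 1)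
  have hxt' : x = a + t • (b - a) := by simpa using hxt.symm
  have hx1 : x.1 = a.1 + t * τ.1 := by rw [hxt']; simp [hτdef]
  have hx2 : x.2 = a.2 + t * τ.2 := by rw [hxt']; simp [hτdef]
  -- the image point
  have hy : F x = p0 + t • d := by
    have h2 : L.linear (b - a) = L b - L a := by
      simpa [vsub_eq_sub] using L.linearMap_vsub b a
    rw [hL x hx, hxt', add_comm a (t • (b - a)), ← vadd_eq_add, AffineMap.map_vadd,
      L.linear.map_smul, h2, vadd_eq_add, ← hL a (left_mem_segment ℝ a b),
      ← hL b (right_mem_segment ℝ a b), hddef, hp0def]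
    abel
  have hy1 : (F x).1 = p0.1 + t * d.1 := by rw [hy]; simp
  have hy2 : (F x).2 = p0.2 + t * d.2 := by rw [hy]; simp
  have hdd : d.1 ^ 2 + d.2 ^ 2 = c ^ 2 := by
    linear_combination (-(c * n.1 + d.2)) * hcn1 + (d.1 - c * n.2) * hcn2 + c ^ 2 * hn
  -- evaluation of the substitution polynomials
  have hkey : ∀ aj τj : ℝ, aj - (p0.1 * d.1 + p0.2 * d.2) * τj / c ^ 2
      + d.1 * τj / c ^ 2 * (F x).1 + d.2 * τj / c ^ 2 * (F x).2 = aj + t * τj := by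
    intro aj τj
    rw [hy1, hy2]
    field_simp
    linear_combination t * τj * hdd
  have hsubst_eval : ∀ j, MvPolynomial.eval ![(F x).1, (F x).2] (subst j) = ![x.1, x.2] j := by
    intro j
    fin_cases j
    · simp only [hsubstdef, map_add, map_mul, MvPolynomial.eval_C, MvPolynomial.eval_X,
        Matrix.cons_val_zero, Matrix.cons_val_one, Matrix.head_cons, Fin.isValue]
      rw [hx1]
      exact hkey a.1 τ.1
    · simp only [hsubstdef, map_add, map_mul, MvPolynomial.eval_C, MvPolynomial.eval_X,
        Matrix.cons_val_zero, Matrix.cons_val_one, Matrix.head_cons, Fin.isValue]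
      rw [hx2]
      exact hkey a.2 τ.2
  -- evaluation of P at the image point
  have hPeval : MvPolynomial.eval ![(F x).1, (F x).2] (MvPolynomial.aeval subst G)
      = MvPolynomial.eval ![x.1, x.2] G := by
    rw [MvPolynomial.aeval_eq_bind₁]
    rw [show (MvPolynomial.eval ![(F x).1, (F x).2] : MvPolynomial (Fin 2) ℝ → ℝ)
        = MvPolynomial.eval₂Hom (RingHom.id ℝ) ![(F x).1, (F x).2] from rfl]
    rw [MvPolynomial.eval₂Hom_bind₁]
    show MvPolynomial.eval (fun j => MvPolynomial.eval ![(F x).1, (F x).2] (subst j)) G = _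
    rw [funext hsubst_eval]
  rw [hPeval]
  -- evaluation of G
  have hGeval : MvPolynomial.eval ![x.1, x.2] G
      = -(c⁻¹) * (τ.1 * (vhat x).2 - τ.2 * (vhat x).1) := by
    rw [hGdef]
    simp only [map_mul, map_sub, MvPolynomial.eval_C]
    rw [hveq x]
  rw [hGeval]
  -- now the analytic computation
  set M := fderiv ℝ F x with hMdef
  set w : ℝ × ℝ := vhat x with hwdef
  have hMw : M w = w.1 • M (1, 0) + w.2 • M (0, 1) := by
    have : w = w.1 • ((1:ℝ), (0:ℝ)) + w.2 • ((0:ℝ), (1:ℝ)) := by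
      simp [Prod.ext_iff]
    conv_lhs => rw [this]
    rw [map_add, _root_.map_smul, _root_.map_smul]
  have hMτ' : τ.1 • M (1, 0) + τ.2 • M (0, 1) = d := by
    rw [← hMτ x hx]
    have : τ = τ.1 • ((1:ℝ), (0:ℝ)) + τ.2 • ((0:ℝ), (1:ℝ)) := by
      simp [Prod.ext_iff]
    conv_rhs => rw [this]
    rw [map_add, _root_.map_smul, _root_.map_smul, hMdef]
  set m11 : ℝ := (M (1, 0)).1
  set m21 : ℝ := (M (1, 0)).2
  set m12 : ℝ := (M (0, 1)).1
  set m22 : ℝ := (M (0, 1)).2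
  have hB1 : m11 * τ.1 + m12 * τ.2 = d.1 := by
    have := congrArg Prod.fst hMτ'
    simpa [mul_comm] using this
  have hB2 : m21 * τ.1 + m22 * τ.2 = d.2 := by
    have := congrArg Prod.snd hMτ'
    simpa [mul_comm] using this
  have hdetc : jacDet F x = m11 * m22 - m12 * m21 := jacDet_eq F x
  have hdx : jacDet F x ≠ 0 := hdet x hxC
  have hvt : vtil (F x) = (jacDet F x)⁻¹ • M w := by
    rw [hpiola x hxC, Amap, ContinuousLinearMap.smul_apply, hMdef, hwdef]
  have hvt1 : (vtil (F x)).1 = (jacDet F x)⁻¹ * (w.1 * m11 + w.2 * m12) := by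
    rw [hvt, hMw]; simp [mul_comm]; ring
  have hvt2 : (vtil (F x)).2 = (jacDet F x)⁻¹ * (w.1 * m21 + w.2 * m22) := by
    rw [hvt, hMw]; simp [mul_comm]; ring
  rw [hvt1, hvt2]
  have key : c * (n.1 * (w.1 * m11 + w.2 * m12) + n.2 * (w.1 * m21 + w.2 * m22))
      = -(jacDet F x) * (τ.1 * w.2 - τ.2 * w.1) := by
    linear_combination (w.1 * m11 + w.2 * m12) * hcn1 + (w.1 * m21 + w.2 * m22) * hcn2
      - (w.1 * m11 + w.2 * m12) * hB2 + (w.1 * m21 + w.2 * m22) * hB1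
      + (τ.1 * w.2 - τ.2 * w.1) * hdetc
  field_simp
  linear_combination key
end
end
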